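/- Let M be a commutative idempotent monoid acting additively on an abelian group G and let F : M → G satisfy the chain rule. Fix X_1, …, X_n ∈ M. Then there exists a G-valued measure F̂ : 2^Σ → G on the set Σ of atoms such that for all q ≥ 1 and all subsets J, L_1, …, L_q ⊆ [n] the Hu identity holds: X_J.F_q(X_{L_1}; …; X_{L_q}) = F̂(⋂_{k=1}^q Σ_{L_k} ∖ Σ_J). -/

import Mathlib

namespace AMRF
/-- An additive monoid action of a commutative monoid `M` on an abelian group `G`. -/
structure MAction (M G : Type*) [CommMonoid M] [AddCommGroup G] where
  act : M → G → G
  act_one : ∀ g, act 1 g = g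
  act_mul : ∀ X Y g, act X (act Y g) = act (X * Y) g
  act_add : ∀ X g h, act X (g + h) = act X g + act X h

variable {M G : Type*} [CommMonoid M] [AddCommGroup G]

/-- `F : M → G` satisfies the chain rule `F(XY) = F(X) + X.F(Y)`. -/
def ChainRule (A : MAction M G) (F : M → G) : Prop :=
  ∀ X Y : M, F (X * Y) = F X + A.act X (F Y)

/-- Higher-order terms on a *reversed* argument list: the head of the list is the *last*
argument `Y_q` in `F_q(Y₁; …; Y_q)`. -/
def Fseq (A : MAction M G) (F : M → G) : List M → G
  | [] => 0
  | [Y] => F Y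
  | Y :: Z :: l => Fseq A F (Z :: l) - A.act Y (Fseq A F (Z :: l))

/-- `Fof A F [Y₁, …, Y_q] = F_q(Y₁; …; Y_q)`, defined inductively by
`F_q(Y₁; …; Y_q) = F_{q−1}(Y₁; …; Y_{q−1}) − Y_q.F_{q−1}(Y₁; …; Y_{q−1})`. -/
def Fof (A : MAction M G) (F : M → G) (l : List M) : G :=
  Fseq A F l.reverse

/-- The interaction term `F(;_{i∈I} X_i)`, with arguments in increasing index order. -/
def Fint (A : MAction M G) (F : M → G) {ι : Type*} [LinearOrder ι] (X : ι → M)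
    (I : Finset ι) : G :=
  Fof A F ((I.sort (· ≤ ·)).map X)

/-- The `F`-independence relation: `X ⊥_F Y | Z` iff `Z.F(X; Y) = 0`, where
`F(X; Y) = F(X) − Y.F(X)` is the second-order term. -/
def Findep (A : MAction M G) (F : M → G) (X Y Z : M) : Prop :=
  A.act Z (F X - A.act Y (F X)) = 0
/-- The atoms `p_I`, indexed by nonempty subsets `I ⊆ [n]`. -/
def Atom (n : ℕ) := {I : Finset (Fin n) // I.Nonempty}

/-- `Σ_L = ⋃_{i ∈ L} Σ_i`: the set of atoms `p_I` with `I ∩ L ≠ ∅`. -/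
def circles {n : ℕ} (L : Finset (Fin n)) : Set (Atom n) :=
  {p | ∃ i ∈ L, i ∈ p.1}

/-- A `G`-valued measure on subsets of atoms: additive over disjoint unions. -/
def IsMeasure {G : Type*} [AddCommGroup G] {n : ℕ} (Fhat : Set (Atom n) → G) : Prop :=
  ∀ S T : Set (Atom n), Disjoint S T → Fhat (S ∪ T) = Fhat S + Fhat T

/-- The Hu identity for `Fhat` with respect to `X₁, …, X_n`:
`X_J.F_q(X_{L₁}; …; X_{L_q}) = F̂(⋂ₖ Σ_{Lₖ} ∖ Σ_J)`. -/
def HuIdentity (A : MAction M G) (F : M → G) {n : ℕ} (X : Fin n → M)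
    (Fhat : Set (Atom n) → G) : Prop :=
  ∀ q : ℕ, 1 ≤ q → ∀ (J : Finset (Fin n)) (L : Fin q → Finset (Fin n)),
    A.act (∏ j ∈ J, X j) (Fof A F (List.ofFn fun k => ∏ i ∈ L k, X i)) =
      Fhat ((⋂ k : Fin q, circles (L k)) \ circles J)

-- ### auxiliary lemmas

lemma my_act_zero (A : MAction M G) (X : M) : A.act X 0 = 0 := by
  have h := A.act_add X 0 0
  rw [add_zero] at h
  have h2 : A.act X 0 + A.act X 0 = A.act X 0 := h.symm
  exact add_eq_right.mp h2

lemma my_act_sub (A : MAction M G) (X : M) (g h : G) :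
    A.act X (g - h) = A.act X g - A.act X h := by
  have h1 : A.act X (g - h) + A.act X h = A.act X g := by
    rw [← A.act_add, sub_add_cancel]
  exact eq_sub_of_add_eq h1

lemma my_F_one (A : MAction M G) (F : M → G) (hF : ChainRule A F) : F 1 = 0 := by
  have h := hF 1 1
  rw [one_mul, A.act_one] at h
  have : F 1 + F 1 = F 1 := h.symm
  exact add_eq_right.mp this

lemma prod_idem {ι : Type*} (hidem : ∀ x : M, x * x = x) (X : ι → M) (s : Finset ι) :
    (∏ i ∈ s, X i) * ∏ i ∈ s, X i = ∏ i ∈ s, X i := by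
  rw [← Finset.prod_mul_distrib]
  exact Finset.prod_congr rfl fun i _ => hidem _

lemma prod_union_idem {ι : Type*} [DecidableEq ι] (hidem : ∀ x : M, x * x = x)
    (X : ι → M) (A B : Finset ι) :
    (∏ i ∈ A, X i) * ∏ i ∈ B, X i = ∏ i ∈ A ∪ B, X i := by
  rw [← Finset.prod_union_inter]
  rw [← Finset.prod_sdiff (s₁ := A ∩ B) (s₂ := A ∪ B)
    (Finset.inter_subset_union), mul_assoc, prod_idem hidem]

lemma insert_sdiff_insert' {ι : Type*} [DecidableEq ι] {a : ι} {I K : Finset ι}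
    (haI : a ∉ I) : insert a I \ insert a K = I \ K := by
  ext x
  simp only [Finset.mem_sdiff, Finset.mem_insert, not_or]
  constructor
  · rintro ⟨hx1 | hx1, hx2, hx3⟩
    · exact absurd hx1 hx2
    · exact ⟨hx1, hx3⟩
  · rintro ⟨hx1, hx2⟩
    exact ⟨Or.inr hx1, fun hxa => haI (hxa ▸ hx1), hx2⟩

lemma mobius_inv {ι : Type*} [DecidableEq ι] (T : Finset ι) :
    ∀ h : Finset ι → G,
    ∑ I ∈ T.powerset, ∑ K ∈ I.powerset, ((-1:ℤ)^((I \ K).card)) • h K = h T := by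
  induction T using Finset.induction_on with
  | empty => intro h; simp
  | @insert a T ha IH =>
    intro h
    have hdisj : Disjoint T.powerset (Finset.image (insert a) T.powerset) := by
      rw [Finset.disjoint_left]
      intro I hI hI2
      obtain ⟨K, _, hK2⟩ := Finset.mem_image.mp hI2
      exact ha (Finset.mem_powerset.mp hI (hK2 ▸ Finset.mem_insert_self a K))
    have hinj : ∀ x ∈ T.powerset, ∀ y ∈ T.powerset, insert a x = insert a y → x = y := by
      intro x hx y hy hxy
      have hax : a ∉ x := fun hc => ha (Finset.mem_powerset.mp hx hc)
      have hay : a ∉ y := fun hc => ha (Finset.mem_powerset.mp hy hc)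
      rw [← Finset.erase_insert hax, hxy, Finset.erase_insert hay]
    rw [Finset.powerset_insert, Finset.sum_union hdisj, Finset.sum_image hinj]
    have key : ∀ I ∈ T.powerset,
        ∑ K ∈ (insert a I).powerset, ((-1:ℤ)^(((insert a I) \ K).card)) • h K
        = -(∑ K ∈ I.powerset, ((-1:ℤ)^((I \ K).card)) • h K)
          + ∑ K ∈ I.powerset, ((-1:ℤ)^((I \ K).card)) • h (insert a K) := by
      intro I hI
      have haI : a ∉ I := fun hc => ha (Finset.mem_powerset.mp hI hc)
      have hdisjI : Disjoint I.powerset (Finset.image (insert a) I.powerset) := by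
        rw [Finset.disjoint_left]
        intro K hK hK2
        obtain ⟨K', _, hK2'⟩ := Finset.mem_image.mp hK2
        exact haI (Finset.mem_powerset.mp hK (hK2' ▸ Finset.mem_insert_self a K'))
      have hinjI : ∀ x ∈ I.powerset, ∀ y ∈ I.powerset, insert a x = insert a y → x = y := by
        intro x hx y hy hxy
        have hax : a ∉ x := fun hc => haI (Finset.mem_powerset.mp hx hc)
        have hay : a ∉ y := fun hc => haI (Finset.mem_powerset.mp hy hc)
        rw [← Finset.erase_insert hax, hxy, Finset.erase_insert hay]
      rw [Finset.powerset_insert, Finset.sum_union hdisjI, Finset.sum_image hinjI]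
      congr 1
      · rw [← Finset.sum_neg_distrib]
        refine Finset.sum_congr rfl fun K hK => ?_
        have haK : a ∉ K := fun hc => haI (Finset.mem_powerset.mp hK hc)
        rw [Finset.insert_sdiff_of_notMem _ haK,
          Finset.card_insert_of_notMem (fun hc => haI (Finset.mem_sdiff.mp hc).1),
          pow_succ, mul_comm, neg_one_mul, neg_smul]
      · refine Finset.sum_congr rfl fun K hK => ?_
        rw [insert_sdiff_insert' haI]
    rw [Finset.sum_congr rfl key, Finset.sum_add_distrib, Finset.sum_neg_distrib,
      IH h, IH (fun K => h (insert a K)), add_neg_cancel_left]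

section Hu

variable (A : MAction M G) (F : M → G) {n : ℕ} (X : Fin n → M)

/-- `φ(S) = F(X_S)`. -/
def phiH (S : Finset (Fin n)) : G := F (∏ i ∈ S, X i)

/-- `g(T) = φ([n]) − φ(Tᶜ)`, the putative measure of the set of atoms `p_I` with `I ⊆ T`. -/
def gH (T : Finset (Fin n)) : G := phiH F X Finset.univ - phiH F X Tᶜ

/-- The atom values, by Möbius inversion. -/
def muH (I : Finset (Fin n)) : G :=
  ∑ K ∈ I.powerset, ((-1:ℤ)^((I \ K).card)) • gH F X K

open Classical in
/-- The measure: sum of atom values. -/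
noncomputable def FhatH (S : Set (Atom n)) : G :=
  ∑ I : Finset (Fin n),
    if h : I.Nonempty then (if (⟨I, h⟩ : Atom n) ∈ S then muH F X I else 0) else 0

lemma sum_muH (T : Finset (Fin n)) : ∑ I ∈ T.powerset, muH F X I = gH F X T :=
  mobius_inv T (gH F X)

lemma FhatH_isMeasure : IsMeasure (FhatH F X) := by
  intro S T hd
  rw [FhatH, FhatH, FhatH, ← Finset.sum_add_distrib]
  refine Finset.sum_congr rfl fun I _ => ?_
  by_cases h : I.Nonempty
  · rw [dif_pos h, dif_pos h, dif_pos h]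
    by_cases hS : (⟨I, h⟩ : Atom n) ∈ S
    · have hT : (⟨I, h⟩ : Atom n) ∉ T := fun hT => Set.disjoint_left.mp hd hS hT
      erw [if_pos (Set.mem_union_left _ hS), if_pos hS, if_neg hT, add_zero]
    · by_cases hT : (⟨I, h⟩ : Atom n) ∈ T
      · erw [if_pos (Set.mem_union_right _ hT), if_neg hS, if_pos hT, zero_add]
      · rw [if_neg (fun hc => hc.elim hS hT), if_neg hS, if_neg hT, add_zero]
  · rw [dif_neg h, dif_neg h, dif_neg h, add_zero]

lemma FhatH_diff (J L : Finset (Fin n)) :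
    FhatH F X (circles L \ circles J) = phiH F X (J ∪ L) - phiH F X J := by
  classical
  have hiff : ∀ (I : Finset (Fin n)) (h : I.Nonempty),
      ((⟨I, h⟩ : Atom n) ∈ circles L \ circles J) ↔ (I ⊆ Jᶜ ∧ ¬ I ⊆ Lᶜ) := by
    intro I h
    show ((∃ i ∈ L, i ∈ I) ∧ ¬∃ i ∈ J, i ∈ I) ↔ (I ⊆ Jᶜ ∧ ¬ I ⊆ Lᶜ)
    constructor
    · rintro ⟨⟨i, hiL, hiI⟩, hJ⟩
      refine ⟨fun x hx => Finset.mem_compl.mpr fun hxJ => hJ ⟨x, hxJ, hx⟩, fun hsub => ?_⟩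
      exact Finset.mem_compl.mp (hsub hiI) hiL
    · rintro ⟨hJ, hL⟩
      obtain ⟨x, hxI, hxLc⟩ := Finset.not_subset.mp hL
      have hxL : x ∈ L := by
        by_contra hc; exact hxLc (Finset.mem_compl.mpr hc)
      refine ⟨⟨x, hxL, hxI⟩, ?_⟩
      rintro ⟨i, hiJ, hiI⟩
      exact Finset.mem_compl.mp (hJ hiI) hiJ
  have hterm : ∀ I : Finset (Fin n),
      (if h : I.Nonempty then
        (@ite G ((⟨I, h⟩ : Atom n) ∈ circles L \ circles J)
          (Classical.propDecidable _) (muH F X I) 0) else 0)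
      = if I ⊆ Jᶜ ∧ ¬ I ⊆ Lᶜ then muH F X I else 0 := by
    intro I
    by_cases h : I.Nonempty
    · rw [dif_pos h]
      by_cases hmem : (I ⊆ Jᶜ ∧ ¬ I ⊆ Lᶜ)
      · rw [if_pos hmem, if_pos ((hiff I h).mpr hmem)]
      · rw [if_neg hmem, if_neg (fun hc => hmem ((hiff I h).mp hc))]
    · rw [dif_neg h]
      have hni : ¬ (I ⊆ Jᶜ ∧ ¬ I ⊆ Lᶜ) := by
        rintro ⟨_, hc⟩
        exact hc ((Finset.not_nonempty_iff_eq_empty.mp h) ▸ Finset.empty_subset _)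
      rw [if_neg hni]
  have h1 : FhatH F X (circles L \ circles J)
      = ∑ I : Finset (Fin n), if I ⊆ Jᶜ ∧ ¬ I ⊆ Lᶜ then muH F X I else 0 := by
    rw [FhatH]
    exact Finset.sum_congr rfl fun I _ => hterm I
  rw [h1, ← Finset.sum_filter]
  have hfil : Finset.univ.filter (fun I : Finset (Fin n) => I ⊆ Jᶜ ∧ ¬ I ⊆ Lᶜ)
      = Jᶜ.powerset \ (Jᶜ ∩ Lᶜ).powerset := by
    ext I
    simp only [Finset.mem_filter, Finset.mem_univ, true_and, Finset.mem_sdiff,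
      Finset.mem_powerset, Finset.subset_inter_iff]
    tauto
  rw [hfil, Finset.sum_sdiff_eq_sub (Finset.powerset_mono.mpr Finset.inter_subset_left),
    sum_muH, sum_muH, gH, gH, compl_compl, Finset.compl_inter, compl_compl, compl_compl]
  abel

end Hu

lemma Fof_ofFn_succ (A : MAction M G) (F : M → G) {q : ℕ} (hq : 1 ≤ q) (Y : Fin (q+1) → M) :
    Fof A F (List.ofFn Y) = Fof A F (List.ofFn fun k : Fin q => Y k.castSucc)
      - A.act (Y (Fin.last q)) (Fof A F (List.ofFn fun k : Fin q => Y k.castSucc)) := by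
  have h1 : List.ofFn Y = (List.ofFn fun k : Fin q => Y k.castSucc) ++ [Y (Fin.last q)] := by
    rw [List.ofFn_succ', List.concat_eq_append]
  rcases hrev : (List.ofFn fun k : Fin q => Y k.castSucc).reverse with _ | ⟨Z, t⟩
  · exfalso
    have hlen := congrArg List.length hrev
    simp at hlen
    omega
  · rw [Fof, h1, List.reverse_concat, hrev, Fof, hrev]
    rfl


/-- generalized Hu theorem. For a commutative idempotent monoid `M` acting
additively on an abelian group `G`, a function `F : M → G` satisfying the chain rule, and
fixed `X₁, …, X_n ∈ M`, there exists a `G`-valued measure `F̂` on the set of atoms such that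
the Hu identity `X_J.F_q(X_{L₁}; …; X_{L_q}) = F̂(⋂ₖ Σ_{Lₖ} ∖ Σ_J)` holds for all `q ≥ 1`
and all `J, L₁, …, L_q ⊆ [n]`. -/
theorem generalized_hu_theorem
    {M G : Type*} [CommMonoid M] [AddCommGroup G]
    (hidem : ∀ x : M, x * x = x)
    (A : MAction M G) (F : M → G) (hF : ChainRule A F)
    (n : ℕ) (X : Fin n → M) :
    ∃ Fhat : Set (Atom n) → G, IsMeasure Fhat ∧ HuIdentity A F X Fhat := by
  refine ⟨FhatH F X, FhatH_isMeasure F X, ?_⟩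
  intro q hq
  induction q, hq using Nat.le_induction with
  | base =>
    intro J L
    have hlist : (List.ofFn fun k : Fin 1 => ∏ i ∈ L k, X i) = [∏ i ∈ L 0, X i] := by
      simp [List.ofFn_succ]
    rw [hlist]
    have hiI : (⋂ k : Fin 1, circles (L k)) = circles (L 0) := by
      ext p; simp [Set.mem_iInter, Fin.forall_fin_one]
    rw [hiI, FhatH_diff]
    have hFof : Fof A F [∏ i ∈ L 0, X i] = F (∏ i ∈ L 0, X i) := rfl
    rw [hFof, phiH, phiH]
    have h := hF (∏ j ∈ J, X j) (∏ i ∈ L 0, X i)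
    rw [prod_union_idem hidem X J (L 0)] at h
    rw [h]
    abel
  | succ q hq IH =>
    intro J L
    rw [Fof_ofFn_succ A F hq (fun k => ∏ i ∈ L k, X i)]
    rw [my_act_sub, A.act_mul, prod_union_idem hidem X J (L (Fin.last q))]
    have hIH1 := IH J (fun k => L k.castSucc)
    have hIH2 := IH (J ∪ L (Fin.last q)) (fun k => L k.castSucc)
    rw [hIH1, hIH2]
    have hBq : (⋂ k : Fin (q+1), circles (L k))
        = (⋂ k : Fin q, circles (L k.castSucc)) ∩ circles (L (Fin.last q)) := by
      ext p
      simp only [Set.mem_iInter, Set.mem_inter_iff]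
      constructor
      · intro hp; exact ⟨fun k => hp k.castSucc, hp (Fin.last q)⟩
      · rintro ⟨h1, h2⟩ k
        exact Fin.lastCases h2 h1 k
    have hcup : circles (J ∪ L (Fin.last q)) = circles J ∪ circles (L (Fin.last q)) := by
      ext p
      simp only [circles, Set.mem_setOf_eq, Set.mem_union, Finset.mem_union]
      constructor
      · rintro ⟨i, hi | hi, hip⟩
        · exact Or.inl ⟨i, hi, hip⟩
        · exact Or.inr ⟨i, hi, hip⟩
      · rintro (⟨i, hi, hip⟩ | ⟨i, hi, hip⟩)
        exacts [⟨i, Or.inl hi, hip⟩, ⟨i, Or.inr hi, hip⟩]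
    have hsplit : (⋂ k : Fin q, circles (L k.castSucc)) \ circles J
        = (((⋂ k : Fin (q+1), circles (L k)) \ circles J)
            ∪ ((⋂ k : Fin q, circles (L k.castSucc)) \ circles (J ∪ L (Fin.last q)))) := by
      rw [hBq, hcup]
      ext p
      simp only [Set.mem_diff, Set.mem_union, Set.mem_inter_iff]
      tauto
    have hdisj : Disjoint ((⋂ k : Fin (q+1), circles (L k)) \ circles J)
        ((⋂ k : Fin q, circles (L k.castSucc)) \ circles (J ∪ L (Fin.last q))) := by
      rw [hBq, hcup, Set.disjoint_left]
      rintro p ⟨⟨_, hpC⟩, _⟩ ⟨_, hp2⟩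
      exact hp2 (Or.inr hpC)
    rw [hsplit, FhatH_isMeasure F X _ _ hdisj]
    abel

end AMRF
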